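/- arXiv:1005.3758 — 2 statements merged into one kernel-verified Lean document; each statement's English description precedes it below -/
import Mathlib

section
/- Let λ ∈ (0,1) and let the parameters lie in P_NI ∪ P_SP with β_A ≠ β_H. Set p★ := α_A^λ·α_H^{1−λ}, q★ := β_A^λ·β_H^{1−λ} (so 0 < q★ < β_λ), x₀ := x₀^{(q★)}, d_T := q★·e^{x₀} ∈ (0,1) and Γ := (q★/2)·e^{x₀}·x₀². For n ≥ 1 define ζ_n := Γ·d_T^{n−1}·(1−d_T^n)/(1−d_T), ϑ_n := (p★/q★)·Γ·((1−d_T^n)/(1−d_T)²)·(1 − d_T·(1+d_T^n)/(1+d_T)), and C_n^L := exp( x₀·(ω₀ − (p★/q★)·d_T/(1−d_T))·(1−d_T^n) + ((p★/q★)·(β_λ + x₀) − α_λ)·n + ζ_n·ω₀ + ϑ_n ). Then for every ω₀ ≥ 1: (a) H_{λ,n} > C_n^L for all n ≥ 1, with ζ_n > 0 and ϑ_n ≥ 0; (b) (C_n^L)_{n≥1} is strictly decreasing; (c) C_n^L < exp( a_n^{(q★)}·ω₀ + Σ_{k=1}^{n} b_k^{(p★,q★)} ) for all n ≥ 1; (d)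 lim_{n→∞} C_n^L = 0 if α_A > 0 and α_H > 0, while lim_{n→∞} C_n^L = exp(ω₀·x₀) if α_A = α_H = 0; (e) lim_{n→∞} (1/n)·log C_n^L = (p★/q★)·(x₀ + β_λ) − α_λ. -/
open Real Filter

/-- One transition weight of the Poisson Galton–Watson process with immigration:
probability that the next generation size is `y` given the previous size is `x`. -/
noncomputable def gwStep (β α : ℝ) (x y : ℕ) : ℝ :=
  Real.exp (-(β * (x : ℝ) + α)) * (β * (x : ℝ) + α) ^ y / (Nat.factorial y : ℝ)

/-- The `n`-step path law (pmf on `Fin n → ℕ`) with initial generation size `ω₀`. -/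
noncomputable def gwPath (β α : ℝ) (ω₀ n : ℕ) (ω : Fin n → ℕ) : ℝ :=
  ∏ k : Fin n,
    gwStep β α
      (if (k : ℕ) = 0 then ω₀ else ω ⟨(k : ℕ) - 1, Nat.lt_of_le_of_lt (Nat.sub_le _ _) k.2⟩)
      (ω k)

/-- Hellinger integral of order `lam` between the `n`-step path laws. -/
noncomputable def hellinger (βA αA βH αH lam : ℝ) (ω₀ n : ℕ) : ℝ :=
  ∑' ω : Fin n → ℕ, gwPath βA αA ω₀ n ω ^ lam * gwPath βH αH ω₀ n ω ^ (1 - lam)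

/-- The recursion `a₀ = 0`, `a_{n+1} = q·e^{a_n} − βl`. -/
noncomputable def aSeq (q βl : ℝ) : ℕ → ℝ
  | 0 => 0
  | n + 1 => q * Real.exp (aSeq q βl n) - βl

/-- The recursion `b₀ = 0`, `b_{n+1} = p·e^{a_n} − αl`. -/
noncomputable def bSeq (p q βl αl : ℝ) : ℕ → ℝ
  | 0 => 0
  | n + 1 => p * Real.exp (aSeq q βl n) - αl


lemma geom_superadd {lam a1 b1 a2 b2 : ℝ} (h0 : 0 < lam) (h1 : lam < 1)
    (ha1 : 0 ≤ a1) (hb1 : 0 ≤ b1) (ha2 : 0 ≤ a2) (hb2 : 0 ≤ b2) :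
    a1 ^ lam * b1 ^ (1 - lam) + a2 ^ lam * b2 ^ (1 - lam)
      ≤ (a1 + a2) ^ lam * (b1 + b2) ^ (1 - lam) := by
  have hl1 : (0:ℝ) < 1 - lam := by linarith
  rcases eq_or_lt_of_le (add_nonneg ha1 ha2) with hS | hS
  · have h1' : a1 = 0 := by linarith
    have h2' : a2 = 0 := by linarith
    simp [h1', h2', Real.zero_rpow (ne_of_gt h0)]
  rcases eq_or_lt_of_le (add_nonneg hb1 hb2) with hT | hT
  · have h1' : b1 = 0 := by linarith
    have h2' : b2 = 0 := by linarith
    simp [h1', h2', Real.zero_rpow (ne_of_gt hl1)]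
  set S := a1 + a2 with hSdef
  set T := b1 + b2 with hTdef
  have hST : 0 ≤ S ^ lam * T ^ (1 - lam) := by positivity
  have key : ∀ a b : ℝ, 0 ≤ a → 0 ≤ b →
      a ^ lam * b ^ (1 - lam)
        ≤ (lam * (a / S) + (1 - lam) * (b / T)) * (S ^ lam * T ^ (1 - lam)) := by
    intro a b ha hb
    have h₁ : ((a/S) ^ lam * (b/T) ^ (1-lam)) * (S ^ lam * T ^ (1-lam))
        = a ^ lam * b ^ (1-lam) := by
      rw [mul_mul_mul_comm, ← Real.mul_rpow (by positivity) hS.le,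
        ← Real.mul_rpow (by positivity) hT.le,
        div_mul_cancel₀ _ (ne_of_gt hS), div_mul_cancel₀ _ (ne_of_gt hT)]
    rw [← h₁]
    exact mul_le_mul_of_nonneg_right
      (Real.geom_mean_le_arith_mean2_weighted h0.le hl1.le (by positivity) (by positivity)
        (by ring)) hST
  have k1 := key a1 b1 ha1 hb1
  have k2 := key a2 b2 ha2 hb2
  have hsum : (lam * (a1 / S) + (1 - lam) * (b1 / T))
      + (lam * (a2 / S) + (1 - lam) * (b2 / T)) = 1 := by
    field_simp
    ring
  have : (lam * (a1 / S) + (1 - lam) * (b1 / T)) * (S ^ lam * T ^ (1 - lam))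
      + (lam * (a2 / S) + (1 - lam) * (b2 / T)) * (S ^ lam * T ^ (1 - lam))
      = S ^ lam * T ^ (1 - lam) := by
    rw [← add_mul, hsum, one_mul]
  linarith

lemma gwStep_nonneg {β α : ℝ} (hβ : 0 ≤ β) (hα : 0 ≤ α) (x y : ℕ) : 0 ≤ gwStep β α x y := by
  unfold gwStep
  have h : (0:ℝ) ≤ β * (x:ℝ) + α := by positivity
  have := Real.exp_pos (-(β * (x:ℝ) + α))
  have hfac : (0:ℝ) < (Nat.factorial y : ℝ) := by exact_mod_cast Nat.factorial_pos y
  positivity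

lemma gwStep_hasSum {β α : ℝ} (hβ : 0 ≤ β) (hα : 0 ≤ α) (x : ℕ) :
    HasSum (gwStep β α x) 1 := by
  unfold gwStep
  set f := β * (x:ℝ) + α with hf
  have h := NormedSpace.expSeries_div_hasSum_exp f
  rw [← Real.exp_eq_exp_ℝ] at h
  have h2 := h.mul_left (Real.exp (-f))
  have : Real.exp (-f) * Real.exp f = 1 := by
    rw [← Real.exp_add]; simp
  simpa [mul_div_assoc, this] using h2

lemma exp_quad_lt {u : ℝ} (hu : 0 < u) : 1 + u + u^2/2 < Real.exp u := by
  have h := Real.sum_le_exp_of_nonneg hu.le 4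
  have : ∑ i ∈ Finset.range 4, u ^ i / i.factorial
      = 1 + u + u^2/2 + u^3/6 := by
    norm_num [Finset.sum_range_succ, Nat.factorial]
  nlinarith [pow_pos hu 3]

lemma rpow_exp' (a lam : ℝ) : Real.exp a ^ lam = Real.exp (lam * a) := by
  rw [Real.rpow_def_of_pos (Real.exp_pos a), Real.log_exp, mul_comm]

lemma step_rpow (β α lam : ℝ) (hβ : 0 ≤ β) (hα : 0 ≤ α) (x y : ℕ) :
    gwStep β α x y ^ lam
      = Real.exp (-(lam * (β * (x:ℝ) + α))) * ((β * (x:ℝ) + α) ^ lam) ^ y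
          / ((y.factorial : ℝ) ^ lam) := by
  unfold gwStep
  set f := β * (x:ℝ) + α with hf
  have hf0 : (0:ℝ) ≤ f := by positivity
  have hfac : (0:ℝ) < (y.factorial : ℝ) := by exact_mod_cast Nat.factorial_pos y
  rw [Real.div_rpow (by positivity) hfac.le,
    Real.mul_rpow (Real.exp_pos _).le (pow_nonneg hf0 _), rpow_exp',
    ← Real.rpow_natCast f y, ← Real.rpow_natCast (f ^ lam) y,
    ← Real.rpow_mul hf0, ← Real.rpow_mul hf0, mul_comm (y:ℝ) lam, mul_neg]

lemma step_hellinger_eq {βA αA βH αH : ℝ} (lam : ℝ) (hβA : 0 ≤ βA) (hβH : 0 ≤ βH)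
    (hαA : 0 ≤ αA) (hαH : 0 ≤ αH) (h1 : lam < 1) (x y : ℕ) :
    gwStep βA αA x y ^ lam * gwStep βH αH x y ^ (1 - lam) =
      Real.exp (-((lam * βA + (1-lam) * βH) * (x:ℝ) + (lam * αA + (1-lam) * αH)))
        * ((βA * (x:ℝ) + αA) ^ lam * (βH * (x:ℝ) + αH) ^ (1-lam)) ^ y
        / (y.factorial : ℝ) := by
  have hfac : (0:ℝ) < (y.factorial : ℝ) := by exact_mod_cast Nat.factorial_pos y
  rw [step_rpow βA αA lam hβA hαA, step_rpow βH αH (1-lam) hβH hαH,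
    div_mul_div_comm, mul_mul_mul_comm, ← Real.exp_add, ← mul_pow, ← Real.rpow_add hfac]
  norm_num
  congr 2
  ring

lemma g_lower {βA αA βH αH lam qstar pstar : ℝ} (hβA : 0 < βA) (hβH : 0 < βH)
    (hαA : 0 ≤ αA) (hαH : 0 ≤ αH) (h0 : 0 < lam) (h1 : lam < 1)
    (hq : qstar = βA ^ lam * βH ^ (1 - lam)) (hp : pstar = αA ^ lam * αH ^ (1 - lam)) (x : ℕ) :
    qstar * (x:ℝ) + pstar ≤ (βA * (x:ℝ) + αA) ^ lam * (βH * (x:ℝ) + αH) ^ (1 - lam) := by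
  have h := geom_superadd (a1 := βA * (x:ℝ)) (b1 := βH * (x:ℝ)) (a2 := αA) (b2 := αH)
      h0 h1 (by positivity) (by positivity) hαA hαH
  rcases Nat.eq_zero_or_pos x with hx | hx
  · subst hp; simp [hx]
  have hxpos : (0:ℝ) < (x:ℝ) := by exact_mod_cast hx
  have e1 : (βA * (x:ℝ)) ^ lam * (βH * (x:ℝ)) ^ (1-lam) = qstar * (x:ℝ) := by
    rw [Real.mul_rpow hβA.le hxpos.le, Real.mul_rpow hβH.le hxpos.le, hq,
      mul_mul_mul_comm, ← Real.rpow_add hxpos]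
    norm_num
  rw [e1] at h
  rw [hp]
  exact h


lemma gwPath_zero (β α : ℝ) (x : ℕ) (ω : Fin 0 → ℕ) : gwPath β α x 0 ω = 1 := by
  unfold gwPath; simp

lemma gwPath_cons (β α : ℝ) (x y : ℕ) (n : ℕ) (ω : Fin n → ℕ) :
    gwPath β α x (n+1) (Fin.cons y ω) = gwStep β α x y * gwPath β α y n ω := by
  unfold gwPath
  rw [Fin.prod_univ_succ]
  refine congrArg₂ (· * ·) ?_ (Finset.prod_congr rfl fun i _ => ?_)
  · simp
  · rw [Fin.cons_succ]
    refine congrArg₂ (gwStep β α) ?_ rfl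
    by_cases h : (i:ℕ) = 0
    · have e0 : (⟨(i.succ : ℕ) - 1, Nat.lt_of_le_of_lt (Nat.sub_le _ _) i.succ.2⟩ : Fin (n+1)) = 0 := by
        simp [Fin.ext_iff, h]
      rw [if_pos h, if_neg (by simp), e0, Fin.cons_zero]
    · have e0 : (⟨(i.succ : ℕ) - 1, Nat.lt_of_le_of_lt (Nat.sub_le _ _) i.succ.2⟩ : Fin (n+1))
          = (⟨(i:ℕ) - 1, Nat.lt_of_le_of_lt (Nat.sub_le _ _) i.2⟩ : Fin n).succ := by
        have hpos : 0 < (i:ℕ) := Nat.pos_of_ne_zero h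
        simp [Fin.ext_iff]
        omega
      rw [if_neg h, if_neg (by simp), e0, Fin.cons_succ]

lemma gwPath_nonneg {β α : ℝ} (hβ : 0 ≤ β) (hα : 0 ≤ α) (x n : ℕ) (ω : Fin n → ℕ) :
    0 ≤ gwPath β α x n ω :=
  Finset.prod_nonneg fun k _ => gwStep_nonneg hβ hα _ _

lemma gwPath_hasSum {β α : ℝ} (hβ : 0 ≤ β) (hα : 0 ≤ α) :
    ∀ n x, HasSum (gwPath β α x n) 1 := by
  intro n
  induction n with
  | zero =>
    intro x
    have h := hasSum_single (f := gwPath β α x 0) default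
      (fun b hb => absurd (Subsingleton.elim b default) hb)
    rwa [gwPath_zero] at h
  | succ n ih =>
    intro x
    rw [← Equiv.hasSum_iff (Fin.consEquiv (fun _ : Fin (n+1) => ℕ))]
    have hfun : (gwPath β α x (n+1)) ∘ (Fin.consEquiv (fun _ : Fin (n+1) => ℕ))
        = fun p : ℕ × (Fin n → ℕ) => gwStep β α x p.1 * gwPath β α p.1 n p.2 := by
      funext p
      exact gwPath_cons β α x p.1 n p.2
    rw [hfun]
    have hnn : ∀ p : ℕ × (Fin n → ℕ), 0 ≤ gwStep β α x p.1 * gwPath β α p.1 n p.2 :=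
      fun p => mul_nonneg (gwStep_nonneg hβ hα _ _) (gwPath_nonneg hβ hα _ _ _)
    have hinner : ∀ y : ℕ, Summable (fun ω : Fin n → ℕ => gwStep β α x y * gwPath β α y n ω) :=
      fun y => ((ih y).summable).mul_left _
    have houter : (fun y : ℕ => ∑' ω : Fin n → ℕ, gwStep β α x y * gwPath β α y n ω)
        = fun y : ℕ => gwStep β α x y := by
      funext y
      rw [((ih y).summable).tsum_mul_left, (ih y).tsum_eq, mul_one]
    have hsum : Summable (fun p : ℕ × (Fin n → ℕ) => gwStep β α x p.1 * gwPath β α p.1 n p.2) := by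
      refine (summable_prod_of_nonneg hnn).2 ⟨hinner, ?_⟩
      rw [houter]
      exact (gwStep_hasSum hβ hα x).summable
    have hval : (∑' p : ℕ × (Fin n → ℕ), gwStep β α x p.1 * gwPath β α p.1 n p.2) = 1 := by
      rw [Summable.tsum_prod' hsum hinner]
      have h2 : ∑' (y:ℕ), ∑' (ω : Fin n → ℕ), gwStep β α x y * gwPath β α y n ω
          = ∑' (y:ℕ), gwStep β α x y :=
        tsum_congr fun y => by rw [((ih y).summable).tsum_mul_left, (ih y).tsum_eq, mul_one]
      rw [h2, (gwStep_hasSum hβ hα x).tsum_eq]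
    exact hval ▸ hsum.hasSum


lemma hellinger_main {βA αA βH αH lam βl αl pstar qstar : ℝ}
    (hβA : 0 < βA) (hβH : 0 < βH) (hαA : 0 ≤ αA) (hαH : 0 ≤ αH)
    (h0 : 0 < lam) (h1 : lam < 1)
    (hβl : βl = lam * βA + (1 - lam) * βH) (hαl : αl = lam * αA + (1 - lam) * αH)
    (hp : pstar = αA ^ lam * αH ^ (1 - lam)) (hq : qstar = βA ^ lam * βH ^ (1 - lam)) :
    ∀ n x, Summable (fun ω : Fin n → ℕ =>
        gwPath βA αA x n ω ^ lam * gwPath βH αH x n ω ^ (1-lam))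
      ∧ Real.exp (aSeq qstar βl n * (x:ℝ) + ∑ k ∈ Finset.Icc 1 n, bSeq pstar qstar βl αl k)
          ≤ hellinger βA αA βH αH lam x n := by
  intro n
  induction n with
  | zero =>
    intro x
    refine ⟨Summable.of_finite, ?_⟩
    have h : hellinger βA αA βH αH lam x 0 = 1 := by
      unfold hellinger
      rw [tsum_eq_single (default : Fin 0 → ℕ)
        (fun b hb => absurd (Subsingleton.elim b default) hb)]
      simp [gwPath_zero]
    rw [h]
    simp [aSeq]
  | succ n ih =>
    intro x
    -- abbreviations
    set A := aSeq qstar βl n with hA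
    set B := ∑ k ∈ Finset.Icc 1 n, bSeq pstar qstar βl αl k with hB
    set gx := (βA * (x:ℝ) + αA) ^ lam * (βH * (x:ℝ) + αH) ^ (1-lam) with hgx
    have hgx0 : 0 ≤ gx := by positivity
    -- summability of the (n+1)-integrand
    have hsum1 : Summable (fun ω : Fin (n+1) → ℕ =>
        gwPath βA αA x (n+1) ω ^ lam * gwPath βH αH x (n+1) ω ^ (1-lam)) := by
      refine Summable.of_nonneg_of_le
        (fun ω => mul_nonneg (Real.rpow_nonneg (gwPath_nonneg hβA.le hαA _ _ _) _)
          (Real.rpow_nonneg (gwPath_nonneg hβH.le hαH _ _ _) _))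
        (fun ω => Real.geom_mean_le_arith_mean2_weighted h0.le (by linarith)
          (gwPath_nonneg hβA.le hαA _ _ _) (gwPath_nonneg hβH.le hαH _ _ _) (by ring))
        ?_
      exact (((gwPath_hasSum hβA.le hαA (n+1) x).summable).mul_left lam).add
        (((gwPath_hasSum hβH.le hαH (n+1) x).summable).mul_left (1-lam))
    refine ⟨hsum1, ?_⟩
    -- transfer through the cons equivalence
    set e := Fin.consEquiv (fun _ : Fin (n+1) => ℕ) with he
    have hcomp : ∀ p : ℕ × (Fin n → ℕ),
        gwPath βA αA x (n+1) (e p) ^ lam * gwPath βH αH x (n+1) (e p) ^ (1-lam)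
        = (gwStep βA αA x p.1 ^ lam * gwStep βH αH x p.1 ^ (1-lam)) *
          (gwPath βA αA p.1 n p.2 ^ lam * gwPath βH αH p.1 n p.2 ^ (1-lam)) := by
      intro p
      have eA : gwPath βA αA x (n+1) (e p) = gwStep βA αA x p.1 * gwPath βA αA p.1 n p.2 :=
        gwPath_cons βA αA x p.1 n p.2
      have eH : gwPath βH αH x (n+1) (e p) = gwStep βH αH x p.1 * gwPath βH αH p.1 n p.2 :=
        gwPath_cons βH αH x p.1 n p.2
      rw [eA, eH, Real.mul_rpow (gwStep_nonneg hβA.le hαA _ _) (gwPath_nonneg hβA.le hαA _ _ _),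
        Real.mul_rpow (gwStep_nonneg hβH.le hαH _ _) (gwPath_nonneg hβH.le hαH _ _ _),
        mul_mul_mul_comm]
    have hGsum : Summable (fun p : ℕ × (Fin n → ℕ) =>
        (gwStep βA αA x p.1 ^ lam * gwStep βH αH x p.1 ^ (1-lam)) *
          (gwPath βA αA p.1 n p.2 ^ lam * gwPath βH αH p.1 n p.2 ^ (1-lam))) := by
      refine Summable.congr (e.summable_iff.2 hsum1) hcomp
    have hGnn : ∀ p : ℕ × (Fin n → ℕ), 0 ≤
        (gwStep βA αA x p.1 ^ lam * gwStep βH αH x p.1 ^ (1-lam)) *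
          (gwPath βA αA p.1 n p.2 ^ lam * gwPath βH αH p.1 n p.2 ^ (1-lam)) := by
      intro p
      have := gwStep_nonneg hβA.le hαA x p.1
      have := gwStep_nonneg hβH.le hαH x p.1
      have := gwPath_nonneg hβA.le hαA p.1 n p.2
      have := gwPath_nonneg hβH.le hαH p.1 n p.2
      positivity
    have hFy : ∀ y : ℕ, Summable (fun ω : Fin n → ℕ =>
        (gwStep βA αA x y ^ lam * gwStep βH αH x y ^ (1-lam)) *
          (gwPath βA αA y n ω ^ lam * gwPath βH αH y n ω ^ (1-lam))) :=
      fun y => ((ih y).1).mul_left _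
    -- step 1 : recursion identity
    have hrec : hellinger βA αA βH αH lam x (n+1)
        = ∑' y : ℕ, (gwStep βA αA x y ^ lam * gwStep βH αH x y ^ (1-lam))
            * hellinger βA αA βH αH lam y n := by
      unfold hellinger
      rw [← Equiv.tsum_eq e]
      rw [tsum_congr hcomp, Summable.tsum_prod' hGsum hFy]
      exact tsum_congr fun y => by simpa using ((ih y).1).tsum_mul_left (gwStep βA αA x y ^ lam * gwStep βH αH x y ^ (1-lam))
    -- summability of the outer series
    have houter : Summable (fun y : ℕ =>
        (gwStep βA αA x y ^ lam * gwStep βH αH x y ^ (1-lam))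
          * hellinger βA αA βH αH lam y n) := by
      have h2 := ((summable_prod_of_nonneg hGnn).1 hGsum).2
      refine h2.congr fun y => ?_
      simpa [hellinger] using ((ih y).1).tsum_mul_left (gwStep βA αA x y ^ lam * gwStep βH αH x y ^ (1-lam))
    -- the minorant series
    have hkey : ∀ y : ℕ,
        (gwStep βA αA x y ^ lam * gwStep βH αH x y ^ (1-lam))
            * Real.exp (A * (y:ℝ) + B)
        = (Real.exp (-(βl * (x:ℝ) + αl)) * Real.exp B)
            * ((gx * Real.exp A) ^ y / (y.factorial : ℝ)) := by
      intro y
      rw [step_hellinger_eq lam hβA.le hβH.le hαA hαH h1 x y, ← hβl, ← hαl, mul_pow,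
        Real.exp_add, mul_comm A (y:ℝ), Real.exp_nat_mul]
      ring
    have hminor : HasSum (fun y : ℕ =>
        (gwStep βA αA x y ^ lam * gwStep βH αH x y ^ (1-lam)) * Real.exp (A * (y:ℝ) + B))
        ((Real.exp (-(βl * (x:ℝ) + αl)) * Real.exp B) * Real.exp (gx * Real.exp A)) := by
      have h := NormedSpace.expSeries_div_hasSum_exp (gx * Real.exp A)
      rw [← Real.exp_eq_exp_ℝ] at h
      have h2 := h.mul_left (Real.exp (-(βl * (x:ℝ) + αl)) * Real.exp B)
      exact (funext hkey : _) ▸ h2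
    -- compare
    have hle : (Real.exp (-(βl * (x:ℝ) + αl)) * Real.exp B) * Real.exp (gx * Real.exp A)
        ≤ hellinger βA αA βH αH lam x (n+1) := by
      rw [hrec, ← hminor.tsum_eq]
      refine Summable.tsum_le_tsum (fun y => ?_) hminor.summable houter
      refine mul_le_mul_of_nonneg_left ((ih y).2) ?_
      have := gwStep_nonneg hβA.le hαA x y
      have := gwStep_nonneg hβH.le hαH x y
      positivity
    refine le_trans ?_ hle
    rw [← Real.exp_add, ← Real.exp_add, Real.exp_le_exp]
    have hstep : qstar * (x:ℝ) + pstar ≤ gx :=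
      g_lower hβA hβH hαA hαH h0 h1 hq hp x
    have hsum2 : ∑ k ∈ Finset.Icc 1 (n+1), bSeq pstar qstar βl αl k
        = B + (pstar * Real.exp A - αl) := by
      rw [Finset.sum_Icc_succ_top (by omega : 1 ≤ n+1)]
      rfl
    have haseq : aSeq qstar βl (n+1) = qstar * Real.exp A - βl := rfl
    rw [hsum2, haseq]
    have hexpA : 0 < Real.exp A := Real.exp_pos A
    nlinarith [mul_le_mul_of_nonneg_right hstep hexpA.le]

lemma exp_quad_le {u : ℝ} (hu : 0 ≤ u) : 1 + u + u^2/2 ≤ Real.exp u := by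
  have h := Real.sum_le_exp_of_nonneg hu 3
  have e : ∑ i ∈ Finset.range 3, u ^ i / i.factorial = 1 + u + u^2/2 := by
    norm_num [Finset.sum_range_succ, Nat.factorial]
  linarith [e ▸ h]

noncomputable def Zseq (Γ dT : ℝ) (k : ℕ) : ℝ := Γ * dT^k * (1 - dT^k) / (dT * (1-dT))

noncomputable def Lseq (x₀ Γ dT : ℝ) (k : ℕ) : ℝ := x₀ * (1 - dT^k) + Zseq Γ dT k

section seqlemmas

variable {q βl x₀ dT Γ : ℝ}
variable (hx₀ : x₀ < 0) (hdT0 : 0 < dT) (hdT1 : dT < 1)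
  (hΓ : Γ = dT * x₀^2 / 2) (hqd : q * Real.exp x₀ = dT) (hβld : βl = dT - x₀)

include hx₀ hdT0 hdT1 hΓ hqd hβld

omit hx₀ hqd hβld in
lemma Zseq_nonneg (k : ℕ) : 0 ≤ Zseq Γ dT k := by
  unfold Zseq
  have h1 : (0:ℝ) ≤ 1 - dT^k := by
    have := pow_le_one₀ hdT0.le hdT1.le (n := k)
    linarith
  have h2 : (0:ℝ) ≤ Γ := by rw [hΓ]; positivity
  have h3 : (0:ℝ) < 1 - dT := by linarith
  positivity

omit hx₀ hqd hβld in
lemma Zseq_rec (k : ℕ) : Zseq Γ dT (k+1) = dT * Zseq Γ dT k + Γ * (dT^k)^2 := by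
  unfold Zseq
  have h3 : (1:ℝ) - dT ≠ 0 := by linarith
  field_simp
  ring

omit hx₀ hdT0 hdT1 hΓ in
lemma aSeq_rec (k : ℕ) :
    aSeq q βl (k+1) = x₀ + dT * (Real.exp (aSeq q βl k - x₀) - 1) := by
  show q * Real.exp (aSeq q βl k) - βl = _
  rw [Real.exp_sub]
  have hexp : Real.exp x₀ ≠ 0 := (Real.exp_pos _).ne'
  field_simp [hβld, ← hqd]
  rw [hβld, ← hqd]
  ring

lemma claimA : ∀ k : ℕ, Lseq x₀ Γ dT k ≤ aSeq q βl k ∧ (1 ≤ k → Lseq x₀ Γ dT k < aSeq q βl k) := by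
  intro k
  induction k with
  | zero =>
    constructor
    · unfold Lseq Zseq; simp [aSeq]
    · omega
  | succ k ih =>
    have hZ := Zseq_nonneg hdT0 hdT1 hΓ (k := k)
    have hℓ0 : 0 ≤ -x₀ * dT^k := mul_nonneg (by linarith) (pow_nonneg hdT0.le k)
    have hℓnn : 0 ≤ -x₀ * dT^k + Zseq Γ dT k := by linarith
    have hstrict : Lseq x₀ Γ dT (k+1) < aSeq q βl (k+1) := by
      rw [aSeq_rec hqd hβld]
      have hul : -x₀ * dT^k + Zseq Γ dT k ≤ aSeq q βl k - x₀ := by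
        have := ih.1; unfold Lseq at this; linarith
      have key : (-x₀ * dT^k + Zseq Γ dT k) + (-x₀ * dT^k + Zseq Γ dT k)^2/2
          < Real.exp (aSeq q βl k - x₀) - 1 := by
        rcases Nat.eq_zero_or_pos k with hk | hk
        · subst hk
          have ha0 : aSeq q βl 0 = 0 := rfl
          have hZ0 : Zseq Γ dT 0 = 0 := by unfold Zseq; simp
          have hq := exp_quad_lt (u := -x₀) (by linarith)
          rw [ha0, hZ0]
          simp only [pow_zero, zero_sub, mul_one, add_zero]
          nlinarith
        · have hlt : -x₀ * dT^k + Zseq Γ dT k < aSeq q βl k - x₀ := by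
            have := ih.2 hk; unfold Lseq at this; linarith
          have hexp := exp_quad_le (le_trans hℓnn hul)
          nlinarith
      have hsq : (x₀ * dT^k)^2 ≤ (-x₀ * dT^k + Zseq Γ dT k)^2 := by nlinarith
      have hZrec := Zseq_rec hdT0 hdT1 hΓ (k := k)
      have hpow : dT^(k+1) = dT * dT^k := by ring
      have h3 : -x₀ * dT^(k+1) + Zseq Γ dT (k+1)
          ≤ dT * ((-x₀ * dT^k + Zseq Γ dT k) + (-x₀ * dT^k + Zseq Γ dT k)^2/2) := by
        rw [hZrec, hpow]
        have hGam : Γ * (dT^k)^2 = dT * (x₀ * dT^k)^2 / 2 := by rw [hΓ]; ring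
        nlinarith [mul_le_mul_of_nonneg_left hsq hdT0.le]
      have h2 : dT * ((-x₀ * dT^k + Zseq Γ dT k) + (-x₀ * dT^k + Zseq Γ dT k)^2/2)
          < dT * (Real.exp (aSeq q βl k - x₀) - 1) := by
        apply (mul_lt_mul_iff_right₀ hdT0).2
        linarith
      have hLs : Lseq x₀ Γ dT (k+1) = x₀ + (-x₀ * dT^(k+1) + Zseq Γ dT (k+1)) := by
        unfold Lseq; ring
      linarith
    exact ⟨hstrict.le, fun _ => hstrict⟩

end seqlemmas

lemma key_ineq {dT u : ℝ} (hu : 0 < u) (hdT0 : 0 < dT) (hlt : dT * (Real.exp u - 1) < u) :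
    (u^2/2)*(dT*(1+dT)-1) < u*(1-dT) := by
  have hcube : u + u^2/2 + u^3/6 ≤ Real.exp u - 1 := by
    have h := Real.sum_le_exp_of_nonneg hu.le 4
    have e : ∑ i ∈ Finset.range 4, u ^ i / i.factorial = 1 + u + u^2/2 + u^3/6 := by
      norm_num [Finset.sum_range_succ, Nat.factorial]
    linarith
  have h1 : dT * (u + u^2/2 + u^3/6) < u := by nlinarith
  have hc : 0 < 1 - dT * (1 + (u/2 + u^2/6)) := by
    have h2 : u * (dT * (1 + (u/2 + u^2/6))) < u * 1 := by nlinarith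
    have := (mul_lt_mul_iff_right₀ hu).1 h2
    linarith
  have hD1 : dT < 1 := by nlinarith
  nlinarith [mul_pos hu hc, mul_pos (mul_pos hu hdT0) (mul_pos hu hu),
    mul_pos (mul_pos hu hu) (mul_pos (sub_pos.2 hD1) (by linarith : (0:ℝ) < 1 + dT))]

section seqlemmas2

variable {q βl x₀ dT Γ : ℝ}
variable (hx₀ : x₀ < 0) (hdT0 : 0 < dT) (hdT1 : dT < 1)
  (hΓ : Γ = dT * x₀^2 / 2) (hqd : q * Real.exp x₀ = dT) (hβld : βl = dT - x₀)
  (hqβ : q < βl)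

include hx₀ hdT0 hdT1 hΓ hqd hβld hqβ

lemma claimB : ∀ k : ℕ, 1 ≤ k → Lseq x₀ Γ dT (k+1) < Lseq x₀ Γ dT k := by
  have hu : (0:ℝ) < -x₀ := by linarith
  have hqe : q = dT * Real.exp (-x₀) := by
    rw [← hqd, Real.exp_neg]
    field_simp
  have hlt : dT * (Real.exp (-x₀) - 1) < -x₀ := by
    have : dT * Real.exp (-x₀) = q := hqe.symm
    nlinarith [hβld, hqβ]
  have hkey := key_ineq hu hdT0 hlt
  intro k hk
  have hZdiff : Zseq Γ dT (k+1) - Zseq Γ dT k = (x₀^2/2) * dT^k * (dT^k*(1+dT) - 1) := by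
    unfold Zseq
    rw [hΓ]
    have h3 : (1:ℝ) - dT ≠ 0 := by linarith
    field_simp
    ring
  have hΔ : Lseq x₀ Γ dT (k+1) - Lseq x₀ Γ dT k
      = dT^k * (x₀*(1-dT) + (x₀^2/2)*(dT^k*(1+dT) - 1)) := by
    unfold Lseq
    linear_combination hZdiff
  have hwk : dT^k ≤ dT := by
    calc dT^k ≤ dT^1 := pow_le_pow_of_le_one hdT0.le hdT1.le hk
    _ = dT := pow_one dT
  have hbr : x₀*(1-dT) + (x₀^2/2)*(dT^k*(1+dT) - 1) < 0 := by
    have hkey' : (x₀^2/2)*(dT*(1+dT)-1) < -x₀*(1-dT) := by nlinarith [hkey]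
    have hmono : (x₀^2/2)*(dT^k*(1+dT)) ≤ (x₀^2/2)*(dT*(1+dT)) :=
      mul_le_mul_of_nonneg_left
        (mul_le_mul_of_nonneg_right hwk (by linarith : (0:ℝ) ≤ 1+dT))
        (by positivity : (0:ℝ) ≤ x₀^2/2)
    nlinarith [hkey', hmono]
  nlinarith [mul_neg_of_pos_of_neg (pow_pos hdT0 k) hbr, hΔ]

lemma claimB' : ∀ m : ℕ, 1 ≤ m → Lseq x₀ Γ dT m ≤ Lseq x₀ Γ dT 1 := by
  intro m hm
  induction m with
  | zero => omega
  | succ m ih =>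
    rcases Nat.eq_zero_or_pos m with h|h
    · subst h; exact le_refl _
    · exact le_trans (claimB hx₀ hdT0 hdT1 hΓ hqd hβld hqβ m h).le (ih h)

end seqlemmas2

lemma sum_geom_Icc {dT : ℝ} (hdT : dT ≠ 1) : ∀ n : ℕ,
    ∑ k ∈ Finset.Icc 1 n, dT^k = dT * (1 - dT^n) / (1 - dT) := by
  have h3 : (1:ℝ) - dT ≠ 0 := fun h => hdT (by linarith)
  intro n
  induction n with
  | zero => simp
  | succ n ih =>
    rw [Finset.sum_Icc_succ_top (by omega), ih]
    field_simp
    ring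

lemma sum_Z_Icc {Γ dT : ℝ} (hdT0 : 0 < dT) (hdT1 : dT < 1) : ∀ n : ℕ,
    ∑ k ∈ Finset.Icc 1 n, Zseq Γ dT k
      = Γ * ((1-dT^n)/(1-dT)^2) * (1 - dT*(1+dT^n)/(1+dT)) := by
  have h3 : (1:ℝ) - dT ≠ 0 := by linarith
  have h4 : (1:ℝ) + dT ≠ 0 := by linarith
  have h5 : dT ≠ 0 := hdT0.ne'
  intro n
  induction n with
  | zero => simp
  | succ n ih =>
    rw [Finset.sum_Icc_succ_top (by omega), ih]
    unfold Zseq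
    field_simp
    ring


/-- Closed-form lower bounds `C_n^L` for the Hellinger integral on
`P_NI ∪ P_SP` with `β_A ≠ β_H`, built from `p★ = α_A^λ α_H^{1−λ}`, `q★ = β_A^λ β_H^{1−λ}`,
the negative fixed point `x₀` of `x ↦ q★·e^x − β_λ`, `d_T = q★·e^{x₀}` and
`Γ = (q★/2)·e^{x₀}·x₀²`. -/
theorem hellinger_closed_form_lower (βA βH αA αH lam : ℝ)
    (hβA : 0 < βA) (hβH : 0 < βH) (hβne : βA ≠ βH)
    (hclass : (αA = 0 ∧ αH = 0) ∨ (0 < αA ∧ 0 < αH))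
    (hlam : lam ∈ Set.Ioo (0 : ℝ) 1) (ω₀ : ℕ) (hω₀ : 1 ≤ ω₀)
    (βl αl pstar qstar : ℝ)
    (hβl : βl = lam * βA + (1 - lam) * βH) (hαl : αl = lam * αA + (1 - lam) * αH)
    (hp : pstar = αA ^ lam * αH ^ (1 - lam)) (hq : qstar = βA ^ lam * βH ^ (1 - lam))
    (x₀ : ℝ) (hx₀neg : x₀ < 0) (hx₀fix : qstar * Real.exp x₀ - βl = x₀)
    (dT Γ : ℝ) (hdT : dT = qstar * Real.exp x₀) (hΓ : Γ = (qstar / 2) * Real.exp x₀ * x₀ ^ 2)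
    (ζ ϑ C : ℕ → ℝ)
    (hζ : ∀ n : ℕ, 1 ≤ n → ζ n = Γ * dT ^ (n - 1) * (1 - dT ^ n) / (1 - dT))
    (hϑ : ∀ n : ℕ, 1 ≤ n → ϑ n = (pstar / qstar) * Γ * ((1 - dT ^ n) / (1 - dT) ^ 2)
      * (1 - dT * (1 + dT ^ n) / (1 + dT)))
    (hC : ∀ n : ℕ, 1 ≤ n →
      C n = Real.exp (x₀ * ((ω₀ : ℝ) - (pstar / qstar) * dT / (1 - dT)) * (1 - dT ^ n)
        + ((pstar / qstar) * (βl + x₀) - αl) * (n : ℝ) + ζ n * (ω₀ : ℝ) + ϑ n)) :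
    (0 < qstar ∧ qstar < βl) ∧
    (∀ n : ℕ, 1 ≤ n → C n < hellinger βA αA βH αH lam ω₀ n ∧ 0 < ζ n ∧ 0 ≤ ϑ n) ∧
    (∀ n : ℕ, 1 ≤ n → C (n + 1) < C n) ∧
    (∀ n : ℕ, 1 ≤ n →
      C n < Real.exp (aSeq qstar βl n * (ω₀ : ℝ)
        + ∑ k ∈ Finset.Icc 1 n, bSeq pstar qstar βl αl k)) ∧
    ((0 < αA ∧ 0 < αH → Tendsto C atTop (nhds 0)) ∧
      (αA = 0 ∧ αH = 0 → Tendsto C atTop (nhds (Real.exp ((ω₀ : ℝ) * x₀))))) ∧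
    Tendsto (fun n : ℕ => (1 / (n : ℝ)) * Real.log (C n)) atTop
      (nhds ((pstar / qstar) * (x₀ + βl) - αl)) := by
  obtain ⟨hl0, hl1⟩ := hlam
  have hαA : 0 ≤ αA := by rcases hclass with ⟨h,_⟩|⟨h,_⟩; exacts [h.ge, h.le]
  have hαH : 0 ≤ αH := by rcases hclass with ⟨_,h⟩|⟨_,h⟩; exacts [h.ge, h.le]
  have hαl0 : 0 ≤ αl := by rw [hαl]; have : (0:ℝ) < 1 - lam := by linarith
                           positivity
  have hq0 : 0 < qstar := by rw [hq]; positivity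
  have hp0 : 0 ≤ pstar := by rw [hp]; positivity
  -- strict AM-GM : qstar < βl
  have hqβl : qstar < βl := by
    have hne : Real.log βA ≠ Real.log βH := fun h =>
      hβne (by rw [← Real.exp_log hβA, ← Real.exp_log hβH, h])
    have hconv := strictConvexOn_exp.2 (Set.mem_univ (Real.log βA))
      (Set.mem_univ (Real.log βH)) hne hl0 (by linarith : (0:ℝ) < 1 - lam) (by ring)
    simp only [smul_eq_mul] at hconv
    rw [Real.exp_log hβA, Real.exp_log hβH] at hconv
    calc qstar = Real.exp (lam * Real.log βA + (1-lam) * Real.log βH) := by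
          rw [hq, Real.rpow_def_of_pos hβA, Real.rpow_def_of_pos hβH, ← Real.exp_add]
          ring_nf
      _ < lam * βA + (1-lam) * βH := hconv
      _ = βl := hβl.symm
  -- nonstrict AM-GM : pstar ≤ αl
  have hpαl : pstar ≤ αl := by
    rcases hclass with ⟨h1,h2⟩|⟨h1,h2⟩
    · rw [hp, hαl, h1, h2, Real.zero_rpow (ne_of_gt hl0)]
      simp
    · have hconv := convexOn_exp.2 (Set.mem_univ (Real.log αA))
        (Set.mem_univ (Real.log αH)) hl0.le (by linarith : (0:ℝ) ≤ 1 - lam) (by ring)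
      simp only [smul_eq_mul] at hconv
      rw [Real.exp_log h1, Real.exp_log h2] at hconv
      calc pstar = Real.exp (lam * Real.log αA + (1-lam) * Real.log αH) := by
            rw [hp, Real.rpow_def_of_pos h1, Real.rpow_def_of_pos h2, ← Real.exp_add]
            ring_nf
        _ ≤ lam * αA + (1-lam) * αH := hconv
        _ = αl := hαl.symm
  -- dT facts
  have hdT0 : 0 < dT := by rw [hdT]; positivity
  have hqd : qstar * Real.exp x₀ = dT := hdT.symm
  have hβld : βl = dT - x₀ := by rw [hdT]; linarith [hx₀fix]
  have hdT1 : dT < 1 := by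
    by_contra hcon
    push_neg at hcon
    have he : 1 + (-x₀) ≤ Real.exp (-x₀) := by
      have := Real.add_one_le_exp (-x₀); linarith
    have hqe : qstar = dT * Real.exp (-x₀) := by
      rw [← hqd, Real.exp_neg]
      field_simp
    nlinarith [Real.exp_pos (-x₀)]
  have h1mdT : (0:ℝ) < 1 - dT := by linarith
  have h1pdT : (0:ℝ) < 1 + dT := by linarith
  have hΓ' : Γ = dT * x₀^2 / 2 := by rw [hΓ, hdT]; ring
  have hΓpos : 0 < Γ := by
    rw [hΓ']
    have hx : x₀ ≠ 0 := ne_of_lt hx₀neg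
    positivity
  set r := pstar / qstar with hr
  have hr0 : 0 ≤ r := div_nonneg hp0 hq0.le
  have hrq : r * qstar = pstar := div_mul_cancel₀ pstar hq0.ne'
  -- identify ζ and ϑ with Zseq sums
  have hZeq : ∀ n : ℕ, 1 ≤ n → ζ n = Zseq Γ dT n := by
    intro n hn
    rw [hζ n hn]
    unfold Zseq
    obtain ⟨m, rfl⟩ : ∃ m, n = m + 1 := ⟨n - 1, by omega⟩
    rw [show m + 1 - 1 = m from rfl]
    field_simp
    ring
  have hsumZ := sum_Z_Icc (Γ := Γ) hdT0 hdT1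
  have hTheta : ∀ n : ℕ, 1 ≤ n → ϑ n = r * (∑ k ∈ Finset.Icc 1 n, Zseq Γ dT k) := by
    intro n hn
    rw [hϑ n hn, hsumZ n]
    ring
  have hζpos : ∀ n : ℕ, 1 ≤ n → 0 < ζ n := by
    intro n hn
    rw [hζ n hn]
    have hlt : dT^n < 1 := pow_lt_one₀ hdT0.le hdT1 (by omega)
    have h2 : (0:ℝ) < 1 - dT^n := by linarith
    positivity
  have hϑnn : ∀ n : ℕ, 1 ≤ n → 0 ≤ ϑ n := by
    intro n hn
    rw [hTheta n hn]
    exact mul_nonneg hr0 (Finset.sum_nonneg fun k _ => Zseq_nonneg hdT0 hdT1 hΓ' k)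
  -- exponent via Lseq
  have hω₀pos : (0:ℝ) < (ω₀:ℝ) := by exact_mod_cast Nat.lt_of_lt_of_le Nat.zero_lt_one hω₀
  have hCeq : ∀ n : ℕ, 1 ≤ n → C n = Real.exp (Lseq x₀ Γ dT n * (ω₀:ℝ)
      + r * (∑ k ∈ Finset.Icc 1 n, Lseq x₀ Γ dT k) + (r * βl - αl) * (n:ℝ)) := by
    intro n hn
    rw [hC n hn, hZeq n hn, hTheta n hn]
    congr 1
    have hsumL : ∑ k ∈ Finset.Icc 1 n, Lseq x₀ Γ dT k
        = x₀ * ((n:ℝ) - dT * (1 - dT^n) / (1 - dT)) + ∑ k ∈ Finset.Icc 1 n, Zseq Γ dT k := by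
      unfold Lseq
      rw [Finset.sum_add_distrib, ← Finset.mul_sum, Finset.sum_sub_distrib,
        sum_geom_Icc (ne_of_lt hdT1) n]
      simp [Nat.card_Icc]
    rw [hsumL]
    unfold Lseq
    rw [hβld]
    ring
  have hA := claimA hx₀neg hdT0 hdT1 hΓ' hqd hβld (q := qstar)
  -- part (c)
  have hbsum : ∀ n : ℕ, ∑ k ∈ Finset.Icc 1 n, bSeq pstar qstar βl αl k
      = r * (∑ k ∈ Finset.Icc 1 n, aSeq qstar βl k) + (r * βl - αl) * (n:ℝ) := by
    intro n
    induction n with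
    | zero => simp
    | succ n ih =>
      rw [Finset.sum_Icc_succ_top (by omega : 1 ≤ n+1), ih,
        Finset.sum_Icc_succ_top (by omega : 1 ≤ n+1)]
      show _ + (pstar * Real.exp (aSeq qstar βl n) - αl) = _
      have ha : aSeq qstar βl (n+1) = qstar * Real.exp (aSeq qstar βl n) - βl := rfl
      rw [ha]
      push_cast
      linear_combination (-Real.exp (aSeq qstar βl n)) * hrq
  have hpartc : ∀ n : ℕ, 1 ≤ n → C n < Real.exp (aSeq qstar βl n * (ω₀:ℝ)
      + ∑ k ∈ Finset.Icc 1 n, bSeq pstar qstar βl αl k) := by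
    intro n hn
    rw [hCeq n hn, Real.exp_lt_exp, hbsum n]
    have h1 : Lseq x₀ Γ dT n * (ω₀:ℝ) < aSeq qstar βl n * (ω₀:ℝ) :=
      (mul_lt_mul_iff_left₀ hω₀pos).2 ((hA n).2 hn)
    have h2 : r * (∑ k ∈ Finset.Icc 1 n, Lseq x₀ Γ dT k)
        ≤ r * (∑ k ∈ Finset.Icc 1 n, aSeq qstar βl k) :=
      mul_le_mul_of_nonneg_left (Finset.sum_le_sum fun k _ => (hA k).1) hr0
    linarith
  -- part (a)
  have hmain := hellinger_main hβA hβH hαA hαH hl0 hl1 hβl hαl hp hq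
  have hparta : ∀ n : ℕ, 1 ≤ n → C n < hellinger βA αA βH αH lam ω₀ n :=
    fun n hn => lt_of_lt_of_le (hpartc n hn) ((hmain n ω₀).2)
  -- part (b)
  have hpartb : ∀ n : ℕ, 1 ≤ n → C (n+1) < C n := by
    intro n hn
    rw [hCeq n hn, hCeq (n+1) (by omega), Real.exp_lt_exp,
      Finset.sum_Icc_succ_top (by omega : 1 ≤ n+1)]
    have hdec := claimB hx₀neg hdT0 hdT1 hΓ' hqd hβld hqβl n hn
    have hLle : Lseq x₀ Γ dT (n+1) ≤ Lseq x₀ Γ dT 1 :=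
      claimB' hx₀neg hdT0 hdT1 hΓ' hqd hβld hqβl (n+1) (by omega)
    have hL1a : Lseq x₀ Γ dT 1 < aSeq qstar βl 1 := (hA 1).2 le_rfl
    have ha1 : aSeq qstar βl 1 = qstar - βl := by
      show qstar * Real.exp (aSeq qstar βl 0) - βl = _
      show qstar * Real.exp 0 - βl = _
      rw [Real.exp_zero]; ring
    have hterm : r * Lseq x₀ Γ dT (n+1) + (r * βl - αl) ≤ 0 := by
      have h5 : Lseq x₀ Γ dT (n+1) + βl ≤ qstar := by linarith
      have h6 : r * (Lseq x₀ Γ dT (n+1) + βl) ≤ r * qstar :=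
        mul_le_mul_of_nonneg_left h5 hr0
      rw [hrq] at h6
      nlinarith
    have h7 : Lseq x₀ Γ dT (n+1) * (ω₀:ℝ) < Lseq x₀ Γ dT n * (ω₀:ℝ) :=
      (mul_lt_mul_iff_left₀ hω₀pos).2 hdec
    push_cast
    have hsplit : (r*βl - αl) * ((n:ℝ)+1) = (r*βl-αl)*(n:ℝ) + (r*βl - αl) := by ring
    have hsplit2 : r * (∑ k ∈ Finset.Icc 1 n, Lseq x₀ Γ dT k + Lseq x₀ Γ dT (n+1))
        = r * (∑ k ∈ Finset.Icc 1 n, Lseq x₀ Γ dT k) + r * Lseq x₀ Γ dT (n+1) := by ring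
    linarith [h7, hterm, hsplit, hsplit2]
  -- limits
  set M := r * (βl + x₀) - αl with hM
  set S : ℕ → ℝ := fun n => x₀ * ((ω₀:ℝ) - r * dT / (1 - dT)) * (1 - dT^n)
      + Γ * dT^n * (1 - dT^n) / (dT * (1-dT)) * (ω₀:ℝ)
      + r * (Γ * ((1 - dT^n)/(1-dT)^2) * (1 - dT*(1+dT^n)/(1+dT))) with hS
  have hCS : ∀ n : ℕ, 1 ≤ n → C n = Real.exp (S n + M * (n:ℝ)) := by
    intro n hn
    rw [hC n hn, hZeq n hn, hϑ n hn]
    congr 1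
    simp only [hS, hM]
    unfold Zseq
    ring
  have ht : Tendsto (fun n : ℕ => dT^n) atTop (nhds 0) :=
    tendsto_pow_atTop_nhds_zero_of_lt_one hdT0.le hdT1
  have hSlim : Tendsto S atTop (nhds (x₀ * ((ω₀:ℝ) - r * dT / (1 - dT)) * (1 - 0)
      + Γ * 0 * (1 - 0) / (dT * (1-dT)) * (ω₀:ℝ)
      + r * (Γ * ((1 - 0)/(1-dT)^2) * (1 - dT*(1+0)/(1+dT))))) := by
    rw [hS]
    refine Tendsto.add (Tendsto.add ?_ ?_) ?_
    · exact tendsto_const_nhds.mul (tendsto_const_nhds.sub ht)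
    · exact (((tendsto_const_nhds.mul ht).mul (tendsto_const_nhds.sub ht)).div_const
        (dT * (1-dT))).mul_const (ω₀:ℝ)
    · exact tendsto_const_nhds.mul
        (((tendsto_const_nhds.sub ht).div_const ((1-dT)^2)).const_mul Γ |>.mul
          (tendsto_const_nhds.sub
            ((tendsto_const_nhds.mul (tendsto_const_nhds.add ht)).div_const (1+dT))))
  -- part (d) SP
  have hSP : 0 < αA ∧ 0 < αH → Tendsto C atTop (nhds 0) := by
    rintro ⟨ha1, ha2⟩
    have hpp : 0 < pstar := by rw [hp]; positivity
    have hM0 : M < 0 := by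
      rw [hM]
      have h8 : r * (βl + x₀) = pstar * Real.exp x₀ := by
        rw [show βl + x₀ = dT by linarith [hβld], ← hqd, ← mul_assoc, hrq]
      rw [h8]
      have h9 : Real.exp x₀ < 1 := Real.exp_lt_one_iff.2 hx₀neg
      have h10 : pstar * Real.exp x₀ < pstar := by
        have := mul_lt_of_lt_one_right hpp h9
        linarith [this]
      exact sub_neg.2 (lt_of_lt_of_le h10 hpαl)
    have hMn : Tendsto (fun n : ℕ => M * (n:ℝ)) atTop atBot :=
      (tendsto_const_mul_atBot_of_neg hM0).2 tendsto_natCast_atTop_atTop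
    have hb : ∀ᶠ n : ℕ in atTop, S n ≤ (x₀ * ((ω₀:ℝ) - r * dT / (1 - dT)) * (1 - 0)
        + Γ * 0 * (1 - 0) / (dT * (1-dT)) * (ω₀:ℝ)
        + r * (Γ * ((1 - 0)/(1-dT)^2) * (1 - dT*(1+0)/(1+dT)))) + 1 :=
      hSlim.eventually (eventually_le_nhds (lt_add_one _))
    have hX : Tendsto (fun n : ℕ => S n + M * (n:ℝ)) atTop atBot :=
      tendsto_atBot_add_left_of_ge' atTop _ hb hMn
    have hE : Tendsto (fun n : ℕ => Real.exp (S n + M * (n:ℝ))) atTop (nhds 0) :=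
      Real.tendsto_exp_atBot.comp hX
    refine hE.congr' ?_
    filter_upwards [eventually_ge_atTop 1] with n hn
    exact (hCS n hn).symm
  -- part (d) NI
  have hNI : αA = 0 ∧ αH = 0 → Tendsto C atTop (nhds (Real.exp ((ω₀:ℝ) * x₀))) := by
    rintro ⟨h1, h2⟩
    have hps : pstar = 0 := by rw [hp, h1, Real.zero_rpow (ne_of_gt hl0), zero_mul]
    have hr0' : r = 0 := by rw [hr, hps, zero_div]
    have hαl' : αl = 0 := by rw [hαl, h1, h2]; ring
    have hM' : M = 0 := by rw [hM, hr0', hαl']; ring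
    have hval : x₀ * ((ω₀:ℝ) - r * dT / (1 - dT)) * (1 - 0)
        + Γ * 0 * (1 - 0) / (dT * (1-dT)) * (ω₀:ℝ)
        + r * (Γ * ((1 - 0)/(1-dT)^2) * (1 - dT*(1+0)/(1+dT))) = (ω₀:ℝ) * x₀ := by
      rw [hr0']
      ring
    have hexpS : Tendsto (fun n : ℕ => Real.exp (S n)) atTop
        (nhds (Real.exp ((ω₀:ℝ) * x₀))) := by
      rw [← hval]
      exact (Real.continuous_exp.tendsto _).comp hSlim
    refine hexpS.congr' ?_
    filter_upwards [eventually_ge_atTop 1] with n hn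
    rw [hCS n hn, hM', zero_mul, add_zero]
  -- part (e)
  have hparte : Tendsto (fun n : ℕ => (1/(n:ℝ)) * Real.log (C n)) atTop (nhds M) := by
    have h0 : Tendsto (fun n : ℕ => (1/(n:ℝ)) * S n + M) atTop
        (nhds (0 * (x₀ * ((ω₀:ℝ) - r * dT / (1 - dT)) * (1 - 0)
          + Γ * 0 * (1 - 0) / (dT * (1-dT)) * (ω₀:ℝ)
          + r * (Γ * ((1 - 0)/(1-dT)^2) * (1 - dT*(1+0)/(1+dT)))) + M)) :=
      (tendsto_one_div_atTop_nhds_zero_nat.mul hSlim).add_const M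
    rw [zero_mul, zero_add] at h0
    refine h0.congr' ?_
    filter_upwards [eventually_ge_atTop 1] with n hn
    rw [hCS n hn, Real.log_exp]
    have hn0 : (n:ℝ) ≠ 0 := Nat.cast_ne_zero.2 (by omega)
    field_simp
  have heq : r * (x₀ + βl) - αl = M := by rw [hM]; ring
  exact ⟨⟨hq0, hqβl⟩, fun n hn => ⟨hparta n hn, hζpos n hn, hϑnn n hn⟩, hpartb, hpartc,
    ⟨hSP, hNI⟩, heq ▸ hparte⟩
end

section
/- In the diffusion-approximation setup, the following limits hold as m → ∞: (a) m·(1 − q_λ^{(m)}) → κ_λ/σ²; (b) m²·(q_λ^{(m)} − β_λ^{(m)}) → −(Λ_λ² − κ_λ²)/(2σ⁴) and m·(1 − β_λ^{(m)}) → κ_λ/σ²; (c) m·x₀^{(m)} → −(Λ_λ − κ_λ)/σ² and m²·Γ^{(m)} → (Λ_λ − κ_λ)²/(2σ⁴); (d) m·(1 − d^{(m),S}) → (Λ_λ + κ_λ)/(2σ²); (e) m·(1 − d^{(m),T}) → Λ_λ/σ² and m²·x₀^{(m)}·(1 − d^{(m),T}) → −Λ_λ·(Λ_λ − κ_λ)/σ⁴.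 -/
open Real Filter

open Topology

lemma aux_slope_limit (f : ℝ → ℝ) (c d : ℝ) (hf : HasDerivAt f d 0) (h0 : f 0 = c) :
    Tendsto (fun x => (f x - c) / x) (𝓝[≠] (0:ℝ)) (nhds d) := by
  have h := hasDerivAt_iff_tendsto_slope.mp hf
  refine h.congr (fun x => ?_)
  simp [slope_def_field, h0, div_eq_div_iff]

lemma aux_second_order (φ φ' : ℝ → ℝ) (A : ℝ)
    (hφ : ∀ᶠ x in nhds (0:ℝ), HasDerivAt φ (φ' x) x)
    (h0 : φ 0 = 0) (h0' : φ' 0 = 0) (hA : HasDerivAt φ' A 0) :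
    Tendsto (fun x => φ x / x ^ 2) (𝓝[≠] (0:ℝ)) (nhds (A / 2)) := by
  have hslope := aux_slope_limit φ' 0 A hA h0'
  have hdiv : Tendsto (fun x => φ' x / (2 * x)) (𝓝[≠] (0:ℝ)) (nhds (A / 2)) := by
    have h2 := hslope.div_const 2
    refine h2.congr (fun x => ?_)
    rw [sub_zero]
    ring
  have hcont : Tendsto φ (𝓝[≠] (0:ℝ)) (nhds 0) := by
    have := (hφ.self_of_nhds).continuousAt.continuousWithinAt (s := {(0:ℝ)}ᶜ)
    rw [ContinuousWithinAt, h0] at this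
    exact this
  have hgcont : Tendsto (fun y : ℝ => y ^ 2) (𝓝[≠] (0:ℝ)) (nhds 0) := by
    have hc : ContinuousAt (fun y : ℝ => y ^ 2) 0 := by fun_prop
    have h2 := hc.continuousWithinAt (s := {(0:ℝ)}ᶜ)
    simpa [ContinuousWithinAt] using h2
  refine HasDerivAt.lhopital_zero_nhdsNE
    (hφ.filter_mono nhdsWithin_le_nhds)
    (Filter.Eventually.of_forall fun x => by simpa using (hasDerivAt_pow 2 x))
    ?_ hcont hgcont hdiv
  filter_upwards [self_mem_nhdsWithin] with x hx
  simp only [Set.mem_compl_iff, Set.mem_singleton_iff] at hx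
  intro h
  exact hx (by linarith [h] )

lemma aux_exp_quad :
    Tendsto (fun x => (Real.exp x - 1 - x) / x ^ 2) (𝓝[≠] (0:ℝ)) (nhds (1 / 2)) := by
  have := aux_second_order (fun x => Real.exp x - 1 - x) (fun x => Real.exp x - 1) 1
    (Filter.Eventually.of_forall fun x => by
      exact ((Real.hasDerivAt_exp x).sub_const 1).sub (hasDerivAt_id' x))
    (by simp) (by simp) (by simpa using (Real.hasDerivAt_exp 0).sub_const 1)
  exact this

lemma aux_g_antitone (q β a b : ℝ) (hq0 : 0 ≤ q) (hq1 : q ≤ 1) (hab : a ≤ b) (hb : b ≤ 0) :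
    q * Real.exp b - β - b ≤ q * Real.exp a - β - a := by
  have h1 : a - b + 1 ≤ Real.exp (a - b) := Real.add_one_le_exp _
  have h2 : Real.exp (a - b) * Real.exp b = Real.exp a := by
    rw [← Real.exp_add]; ring_nf
  have h3 : Real.exp b ≤ 1 := Real.exp_le_one_iff.mpr hb
  have h4 : (0:ℝ) < Real.exp b := Real.exp_pos b
  have h5 : Real.exp a ≤ Real.exp b := Real.exp_le_exp.mpr hab
  nlinarith [mul_le_mul_of_nonneg_right h1 h4.le, mul_nonneg (sub_nonneg.2 hq1) (sub_nonneg.2 h5),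
    mul_nonneg (sub_nonneg.2 hab) (sub_nonneg.2 h3)]

lemma aux_x0_lt (q β x₀ c : ℝ) (hq0 : 0 ≤ q) (hq1 : q ≤ 1)
    (hfix : q * Real.exp x₀ - β = x₀) (hx0 : x₀ ≤ 0) (hc : c ≤ 0)
    (hgc : q * Real.exp c - β - c < 0) : x₀ < c := by
  by_contra h
  push_neg at h
  have := aux_g_antitone q β c x₀ hq0 hq1 h hx0
  rw [hfix] at this
  linarith

lemma aux_lt_x0 (q β x₀ c : ℝ) (hq0 : 0 ≤ q) (hq1 : q ≤ 1)
    (hfix : q * Real.exp x₀ - β = x₀) (hx0 : x₀ ≤ 0) (hc : c ≤ 0)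
    (hgc : 0 < q * Real.exp c - β - c) : c < x₀ := by
  by_contra h
  push_neg at h
  have := aux_g_antitone q β x₀ c hq0 hq1 h hc
  rw [hfix] at this
  linarith

lemma aux_hasDerivAt_G (κA κH lam x : ℝ) (hA : 0 < 1 - κA*x) (hH : 0 < 1 - κH*x) :
    HasDerivAt (fun y => lam * Real.log (1-κA*y) + (1-lam) * Real.log (1-κH*y))
      (lam * (-κA / (1-κA*x)) + (1-lam) * (-κH / (1-κH*x))) x := by
  have h1 : HasDerivAt (fun y : ℝ => 1 - κA*y) (-κA) x := by
    simpa using ((hasDerivAt_id x).const_mul κA).const_sub 1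
  have h2 : HasDerivAt (fun y : ℝ => 1 - κH*y) (-κH) x := by
    simpa using ((hasDerivAt_id x).const_mul κH).const_sub 1
  exact ((h1.log hA.ne').const_mul lam).add ((h2.log hH.ne').const_mul (1-lam))

lemma aux_hasDerivAt_G' (κA κH lam : ℝ) :
    HasDerivAt (fun y => lam * (-κA / (1-κA*y)) + (1-lam) * (-κH / (1-κH*y)))
      (-(lam * κA^2 + (1-lam) * κH^2)) 0 := by
  have h1 : HasDerivAt (fun y : ℝ => 1 - κA*y) (-κA) 0 := by
    simpa using ((hasDerivAt_id (0:ℝ)).const_mul κA).const_sub 1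
  have h2 : HasDerivAt (fun y : ℝ => 1 - κH*y) (-κH) 0 := by
    simpa using ((hasDerivAt_id (0:ℝ)).const_mul κH).const_sub 1
  have e1 : (1:ℝ) - κA*0 ≠ 0 := by norm_num
  have e2 : (1:ℝ) - κH*0 ≠ 0 := by norm_num
  have hd1 := ((hasDerivAt_const (0:ℝ) (-κA)).div h1 e1).const_mul lam
  have hd2 := ((hasDerivAt_const (0:ℝ) (-κH)).div h2 e2).const_mul (1-lam)
  have : HasDerivAt (fun y => lam * (-κA / (1-κA*y)) + (1-lam) * (-κH / (1-κH*y))) _ 0 :=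
    hd1.add hd2
  convert this using 1
  norm_num
  ring

lemma aux_limit1 (κA κH lam κl : ℝ) (hκl : κl = lam*κA + (1-lam)*κH) :
    Tendsto (fun x => (1 - Real.exp (lam * Real.log (1-κA*x) + (1-lam) * Real.log (1-κH*x))) / x)
      (𝓝[≠] (0:ℝ)) (nhds κl) := by
  have hG0 := aux_hasDerivAt_G κA κH lam 0 (by norm_num) (by norm_num)
  have hf0 : HasDerivAt (fun x => Real.exp (lam * Real.log (1-κA*x) + (1-lam) * Real.log (1-κH*x)))
      (-κl) 0 := by
    have := hG0.exp
    convert this using 1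
    simp [hκl]
    ring
  have h := (aux_slope_limit _ 1 (-κl) hf0 (by simp)).neg
  rw [neg_neg] at h
  refine h.congr (fun x => ?_)
  rw [← neg_div]
  ring_nf

lemma aux_limit2 (κA κH lam κl Λ2 : ℝ) (hκl : κl = lam*κA + (1-lam)*κH)
    (hΛ2 : Λ2 = lam*κA^2 + (1-lam)*κH^2) :
    Tendsto (fun x =>
        (Real.exp (lam * Real.log (1-κA*x) + (1-lam) * Real.log (1-κH*x)) - 1 + κl*x) / x^2)
      (𝓝[≠] (0:ℝ)) (nhds ((κl^2 - Λ2)/2)) := by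
  have c1 : Tendsto (fun x : ℝ => 1 - κA*x) (nhds 0) (nhds 1) := by
    have hc : Continuous (fun x : ℝ => 1 - κA*x) := by continuity
    simpa using hc.tendsto 0
  have c2 : Tendsto (fun x : ℝ => 1 - κH*x) (nhds 0) (nhds 1) := by
    have hc : Continuous (fun x : ℝ => 1 - κH*x) := by continuity
    simpa using hc.tendsto 0
  have hpos : ∀ᶠ x in nhds (0:ℝ), 0 < 1 - κA*x ∧ 0 < 1 - κH*x :=
    (c1.eventually (eventually_gt_nhds one_pos)).and (c2.eventually (eventually_gt_nhds one_pos))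
  have hφ : ∀ᶠ x in nhds (0:ℝ), HasDerivAt
      (fun x => Real.exp (lam * Real.log (1-κA*x) + (1-lam) * Real.log (1-κH*x)) - 1 + κl*x)
      ((lam * (-κA / (1-κA*x)) + (1-lam) * (-κH / (1-κH*x))) *
        Real.exp (lam * Real.log (1-κA*x) + (1-lam) * Real.log (1-κH*x)) + κl) x := by
    filter_upwards [hpos] with x hx
    have hG := aux_hasDerivAt_G κA κH lam x hx.1 hx.2
    have h : HasDerivAt
        (fun x => Real.exp (lam * Real.log (1-κA*x) + (1-lam) * Real.log (1-κH*x)) - 1 + κl*x) _ x :=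
      (hG.exp.sub_const 1).add ((hasDerivAt_id x).const_mul κl)
    convert h using 1
    ring
  have hG0 := aux_hasDerivAt_G κA κH lam 0 (by norm_num) (by norm_num)
  have hA : HasDerivAt
      (fun x => (lam * (-κA / (1-κA*x)) + (1-lam) * (-κH / (1-κH*x))) *
        Real.exp (lam * Real.log (1-κA*x) + (1-lam) * Real.log (1-κH*x)) + κl)
      (κl^2 - Λ2) 0 := by
    have h : HasDerivAt
        (fun x => (lam * (-κA / (1-κA*x)) + (1-lam) * (-κH / (1-κH*x))) *
          Real.exp (lam * Real.log (1-κA*x) + (1-lam) * Real.log (1-κH*x)) + κl) _ 0 :=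
      ((aux_hasDerivAt_G' κA κH lam).mul hG0.exp).add_const κl
    convert h using 1
    simp [hκl, hΛ2]
    ring
  have := aux_second_order _ _ (κl^2 - Λ2) hφ (by simp) (by simp [hκl]; ring) hA
  exact this

set_option maxHeartbeats 4000000 in
/-- Asymptotics of the quantities appearing in the diffusion
approximation: with `β_•^{(m)} = 1 − κ_•/(σ²m)`, `q_λ^{(m)} = (β_A^{(m)})^λ (β_H^{(m)})^{1−λ}`,
`β_λ^{(m)} = λβ_A^{(m)} + (1−λ)β_H^{(m)}`, `x₀^{(m)}` the unique negative fixed point of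
`x ↦ q_λ^{(m)} e^x − β_λ^{(m)}`, `Γ^{(m)} = (q_λ^{(m)}/2) e^{x₀^{(m)}} (x₀^{(m)})²`,
`d^{(m),T} = q_λ^{(m)} e^{x₀^{(m)}}` and
`d^{(m),S} = (x₀^{(m)} − (q_λ^{(m)} − β_λ^{(m)}))/x₀^{(m)}`, the limits (a)–(e) hold as
`m → ∞`, with `κ_λ = λκ_A + (1−λ)κ_H` and `Λ_λ = √(λκ_A² + (1−λ)κ_H²)`. -/
theorem diffusion_approx_limits (σ η κA κH lam : ℝ)
    (hσ : 0 < σ) (hη : 0 ≤ η) (hκA : 0 ≤ κA) (hκH : 0 ≤ κH) (hκ : κA ≠ κH)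
    (hlam : lam ∈ Set.Ioo (0 : ℝ) 1)
    (κl Λl : ℝ) (hκl : κl = lam * κA + (1 - lam) * κH)
    (hΛl : Λl = Real.sqrt (lam * κA ^ 2 + (1 - lam) * κH ^ 2))
    (βAm βHm qm βlm : ℕ → ℝ)
    (hβAm : ∀ m : ℕ, βAm m = 1 - κA / (σ ^ 2 * (m : ℝ)))
    (hβHm : ∀ m : ℕ, βHm m = 1 - κH / (σ ^ 2 * (m : ℝ)))
    (hqm : ∀ m : ℕ, qm m = (βAm m) ^ lam * (βHm m) ^ (1 - lam))
    (hβlm : ∀ m : ℕ, βlm m = lam * βAm m + (1 - lam) * βHm m)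
    (x₀ : ℕ → ℝ)
    (hx₀ : ∀ m : ℕ, max κA κH < σ ^ 2 * (m : ℝ) →
      x₀ m < 0 ∧ qm m * Real.exp (x₀ m) - βlm m = x₀ m) :
    Tendsto (fun m : ℕ => (m : ℝ) * (1 - qm m)) atTop (nhds (κl / σ ^ 2)) ∧
    (Tendsto (fun m : ℕ => (m : ℝ) ^ 2 * (qm m - βlm m)) atTop
        (nhds (-(Λl ^ 2 - κl ^ 2) / (2 * σ ^ 4))) ∧
      Tendsto (fun m : ℕ => (m : ℝ) * (1 - βlm m)) atTop (nhds (κl / σ ^ 2))) ∧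
    (Tendsto (fun m : ℕ => (m : ℝ) * x₀ m) atTop (nhds (-(Λl - κl) / σ ^ 2)) ∧
      Tendsto (fun m : ℕ => (m : ℝ) ^ 2 * (qm m / 2 * Real.exp (x₀ m) * (x₀ m) ^ 2)) atTop
        (nhds ((Λl - κl) ^ 2 / (2 * σ ^ 4)))) ∧
    Tendsto (fun m : ℕ => (m : ℝ) * (1 - (x₀ m - (qm m - βlm m)) / x₀ m)) atTop
      (nhds ((Λl + κl) / (2 * σ ^ 2))) ∧
    (Tendsto (fun m : ℕ => (m : ℝ) * (1 - qm m * Real.exp (x₀ m))) atTop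
        (nhds (Λl / σ ^ 2)) ∧
      Tendsto (fun m : ℕ => (m : ℝ) ^ 2 * x₀ m * (1 - qm m * Real.exp (x₀ m))) atTop
        (nhds (-Λl * (Λl - κl) / σ ^ 4))) := by
  obtain ⟨hl0, hl1⟩ := hlam
  have hl1' : (0:ℝ) < 1 - lam := by linarith
  have hσ2 : (0:ℝ) < σ ^ 2 := by positivity
  have hσ4 : (0:ℝ) < σ ^ 4 := by positivity
  -- basic facts about κl and Λl
  have hκor : 0 < κA ∨ 0 < κH := by
    rcases hκA.lt_or_eq with h | h
    · exact Or.inl h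
    · rcases hκH.lt_or_eq with h2 | h2
      · exact Or.inr h2
      · exact absurd (h.symm.trans h2) hκ
  have hκl0 : 0 < κl := by
    rw [hκl]
    rcases hκor with h | h
    · nlinarith [mul_pos hl0 h, mul_nonneg hl1'.le hκH]
    · nlinarith [mul_pos hl1' h, mul_nonneg hl0.le hκA]
  have hΛ2 : Λl ^ 2 = lam * κA ^ 2 + (1 - lam) * κH ^ 2 := by
    rw [hΛl, Real.sq_sqrt]
    nlinarith [mul_nonneg hl0.le (sq_nonneg κA), mul_nonneg hl1'.le (sq_nonneg κH)]
  have hΛ0 : 0 ≤ Λl := hΛl ▸ Real.sqrt_nonneg _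
  have hABne : κA - κH ≠ 0 := sub_ne_zero.2 hκ
  have hABsq : 0 < (κA - κH) ^ 2 := by positivity
  have hgap : κl ^ 2 < Λl ^ 2 := by
    rw [hΛ2, hκl]
    nlinarith [mul_pos (mul_pos hl0 hl1') hABsq]
  have hκΛ : κl < Λl := by nlinarith
  have hΛκne : Λl - κl ≠ 0 := sub_ne_zero.2 hκΛ.ne'
  -- ε
  have hmono : Tendsto (fun m : ℕ => σ ^ 2 * (m : ℝ)) atTop atTop :=
    Tendsto.const_mul_atTop hσ2 tendsto_natCast_atTop_atTop
  have hε0 : Tendsto (fun m : ℕ => 1 / (σ ^ 2 * (m : ℝ))) atTop (nhds 0) := by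
    exact hmono.inv_tendsto_atTop.congr fun m => (one_div _).symm
  have hεtend : Tendsto (fun m : ℕ => 1 / (σ ^ 2 * (m : ℝ))) atTop (𝓝[≠] (0:ℝ)) := by
    rw [tendsto_nhdsWithin_iff]
    refine ⟨hε0, ?_⟩
    filter_upwards [eventually_ge_atTop 1] with m hm
    have hm0 : (0:ℝ) < m := by exact_mod_cast hm
    simp only [Set.mem_compl_iff, Set.mem_singleton_iff]
    positivity
  have hEv : ∀ᶠ m : ℕ in atTop, max κA κH < σ ^ 2 * (m : ℝ) ∧ 1 ≤ m :=
    (hmono.eventually_gt_atTop (max κA κH)).and (eventually_ge_atTop 1)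
  -- pointwise facts
  have hfacts : ∀ m : ℕ, 1 ≤ m → max κA κH < σ ^ 2 * (m : ℝ) →
      (0:ℝ) < m ∧
      qm m = Real.exp (lam * Real.log (1 - κA * (1/(σ^2*(m:ℝ)))) +
        (1-lam) * Real.log (1 - κH * (1/(σ^2*(m:ℝ))))) ∧
      βlm m = 1 - κl * (1/(σ^2*(m:ℝ))) ∧ 0 < qm m ∧ qm m ≤ 1 := by
    intro m hm1 hmK
    have hm0 : (0:ℝ) < m := by exact_mod_cast hm1
    have hσm : (0:ℝ) < σ ^ 2 * m := by positivity
    have hA1 : κA / (σ ^ 2 * m) < 1 := (div_lt_one hσm).2 ((le_max_left _ _).trans_lt hmK)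
    have hH1 : κH / (σ ^ 2 * m) < 1 := (div_lt_one hσm).2 ((le_max_right _ _).trans_lt hmK)
    have hA0 : 0 ≤ κA / (σ ^ 2 * m) := by positivity
    have hH0 : 0 ≤ κH / (σ ^ 2 * m) := by positivity
    have hβA0 : 0 < βAm m := by rw [hβAm]; linarith
    have hβA1 : βAm m ≤ 1 := by rw [hβAm]; linarith
    have hβH0 : 0 < βHm m := by rw [hβHm]; linarith
    have hβH1 : βHm m ≤ 1 := by rw [hβHm]; linarith
    have hβAeq : βAm m = 1 - κA * (1/(σ^2*(m:ℝ))) := by rw [hβAm]; ring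
    have hβHeq : βHm m = 1 - κH * (1/(σ^2*(m:ℝ))) := by rw [hβHm]; ring
    refine ⟨hm0, ?_, ?_, ?_, ?_⟩
    · rw [hqm, Real.rpow_def_of_pos hβA0, Real.rpow_def_of_pos hβH0, ← Real.exp_add,
        hβAeq, hβHeq]
      congr 1
      ring
    · rw [hβlm, hβAeq, hβHeq, hκl]; ring
    · rw [hqm]
      exact mul_pos (Real.rpow_pos_of_pos hβA0 _) (Real.rpow_pos_of_pos hβH0 _)
    · rw [hqm]
      have h1 : (βAm m) ^ lam ≤ 1 := Real.rpow_le_one hβA0.le hβA1 hl0.le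
      have h2 : (βHm m) ^ (1-lam) ≤ 1 := Real.rpow_le_one hβH0.le hβH1 hl1'.le
      have h3 : (0:ℝ) ≤ (βHm m) ^ (1-lam) := (Real.rpow_pos_of_pos hβH0 _).le
      nlinarith
  -- (a)
  have T1 : Tendsto (fun m : ℕ => (m : ℝ) * (1 - qm m)) atTop (nhds (κl / σ ^ 2)) := by
    have hcomp := ((aux_limit1 κA κH lam κl hκl).comp hεtend).div_const (σ ^ 2)
    refine hcomp.congr' ?_
    filter_upwards [hEv] with m ⟨hmK, hm1⟩
    obtain ⟨hm0, hqeq, -, -, -⟩ := hfacts m hm1 hmK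
    simp only [Function.comp]
    rw [← hqeq]
    have hmne : (m:ℝ) ≠ 0 := hm0.ne'
    field_simp
  -- (b) first part
  have T2 : Tendsto (fun m : ℕ => (m : ℝ) ^ 2 * (qm m - βlm m)) atTop
      (nhds (-(Λl ^ 2 - κl ^ 2) / (2 * σ ^ 4))) := by
    have hcomp := ((aux_limit2 κA κH lam κl (Λl ^ 2) hκl hΛ2).comp hεtend).div_const (σ ^ 4)
    have hval : -(Λl ^ 2 - κl ^ 2) / (2 * σ ^ 4) = (κl ^ 2 - Λl ^ 2) / 2 / σ ^ 4 := by ring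
    rw [hval]
    refine hcomp.congr' ?_
    filter_upwards [hEv] with m ⟨hmK, hm1⟩
    obtain ⟨hm0, hqeq, hβleq, -, -⟩ := hfacts m hm1 hmK
    simp only [Function.comp]
    rw [← hqeq, hβleq]
    have hmne : (m:ℝ) ≠ 0 := hm0.ne'
    field_simp
    ring
  -- (b) second part
  have Tb2 : Tendsto (fun m : ℕ => (m : ℝ) * (1 - βlm m)) atTop (nhds (κl / σ ^ 2)) := by
    refine tendsto_const_nhds.congr' ?_
    filter_upwards [hEv] with m ⟨hmK, hm1⟩
    obtain ⟨hm0, -, hβleq, -, -⟩ := hfacts m hm1 hmK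
    rw [hβleq]
    have hmne : (m:ℝ) ≠ 0 := hm0.ne'
    field_simp
    ring
  -- q tends to 1
  have hinv : Tendsto (fun m : ℕ => ((m:ℝ))⁻¹) atTop (nhds 0) :=
    tendsto_inv_atTop_zero.comp tendsto_natCast_atTop_atTop
  have hq_tendsto : Tendsto qm atTop (nhds 1) := by
    have h0 : Tendsto (fun m : ℕ => ((m:ℝ) * (1 - qm m)) * ((m:ℝ))⁻¹) atTop (nhds 0) := by
      have := T1.mul hinv
      rwa [mul_zero] at this
    have h1 : Tendsto (fun m : ℕ => 1 - qm m) atTop (nhds 0) := by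
      refine h0.congr' ?_
      filter_upwards [eventually_ge_atTop 1] with m hm
      have hm0 : (0:ℝ) < m := by exact_mod_cast hm
      have hmne : (m:ℝ) ≠ 0 := hm0.ne'
      field_simp
    have h2 : Tendsto (fun m : ℕ => 1 - (1 - qm m)) atTop (nhds (1 - 0)) :=
      tendsto_const_nhds.sub h1
    rw [sub_zero] at h2
    exact h2.congr fun m => by ring
  -- second-order exponential limit along -u/m
  have hE : ∀ u : ℝ, Tendsto (fun m : ℕ => (m:ℝ)^2 * (Real.exp (-u/(m:ℝ)) - 1 + u/(m:ℝ)))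
      atTop (nhds (u^2/2)) := by
    intro u
    rcases eq_or_ne u 0 with rfl | hu
    · have hfun : (fun m : ℕ => (m:ℝ)^2 * (Real.exp (-0/(m:ℝ)) - 1 + 0/(m:ℝ))) =
          fun _ => (0:ℝ) := by
        funext m; simp
      rw [hfun]
      norm_num
    · have htm : Tendsto (fun m : ℕ => -u/(m:ℝ)) atTop (𝓝[≠] (0:ℝ)) := by
        rw [tendsto_nhdsWithin_iff]
        constructor
        · exact tendsto_const_nhds.div_atTop tendsto_natCast_atTop_atTop
        · filter_upwards [eventually_ge_atTop 1] with m hm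
          have hm0 : (0:ℝ) < m := by exact_mod_cast hm
          simp only [Set.mem_compl_iff, Set.mem_singleton_iff]
          exact div_ne_zero (neg_ne_zero.2 hu) hm0.ne'
      have hcomp := (aux_exp_quad.comp htm).const_mul (u^2)
      have hval : u^2 * (1/2) = u^2/2 := by ring
      rw [hval] at hcomp
      refine hcomp.congr' ?_
      filter_upwards [eventually_ge_atTop 1] with m hm
      have hm0 : (0:ℝ) < m := by exact_mod_cast hm
      have hmne : (m:ℝ) ≠ 0 := hm0.ne'
      simp only [Function.comp]
      field_simp
      ring
  -- the key quadratic limit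
  have hkey : ∀ u : ℝ, Tendsto
      (fun m : ℕ => (m:ℝ)^2 * (qm m * Real.exp (-u/(m:ℝ)) - βlm m + u/(m:ℝ))) atTop
      (nhds (u^2/2 + κl/σ^2*u + -(Λl^2 - κl^2)/(2*σ^4))) := by
    intro u
    have h := ((hq_tendsto.mul (hE u)).add (T1.const_mul u)).add T2
    have h' : Tendsto
        (fun m : ℕ => qm m * ((m:ℝ)^2 * (Real.exp (-u/(m:ℝ)) - 1 + u/(m:ℝ))) +
          u * ((m:ℝ) * (1 - qm m)) + (m:ℝ)^2 * (qm m - βlm m)) atTop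
        (nhds (u^2/2 + κl/σ^2*u + -(Λl^2 - κl^2)/(2*σ^4))) := by
      convert h using 2
      ring
    refine h'.congr' ?_
    filter_upwards [eventually_ge_atTop 1] with m hm
    have hm0 : (0:ℝ) < m := by exact_mod_cast hm
    have hmne : (m:ℝ) ≠ 0 := hm0.ne'
    field_simp
    ring
  -- (c) first part : the hard limit
  have T3 : Tendsto (fun m : ℕ => (m : ℝ) * x₀ m) atTop (nhds (-(Λl - κl) / σ ^ 2)) := by
    rw [Metric.tendsto_nhds]
    intro δ hδ
    have hL : 0 < (Λl - κl) / σ ^ 2 := div_pos (sub_pos.2 hκΛ) hσ2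
    have hM : 0 ≤ (Λl + κl) / σ ^ 2 := div_nonneg (by linarith) hσ2.le
    -- lower bound
    have hlow : ∀ᶠ m : ℕ in atTop, -δ < (m:ℝ) * x₀ m + (Λl - κl) / σ ^ 2 := by
      obtain ⟨u, hu⟩ : ∃ u : ℝ, u = (Λl - κl) / σ ^ 2 + δ := ⟨_, rfl⟩
      have hu0 : 0 < u := by linarith
      have hpos : 0 < u^2/2 + κl/σ^2*u + -(Λl^2 - κl^2)/(2*σ^4) := by
        have hval : u^2/2 + κl/σ^2*u + -(Λl^2 - κl^2)/(2*σ^4) = δ*(δ + 2*(Λl/σ^2))/2 := by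
          rw [hu]
          field_simp
          ring
        rw [hval]
        have h2 : 0 ≤ Λl / σ ^ 2 := div_nonneg hΛ0 hσ2.le
        have h3 : 0 < δ + 2*(Λl/σ^2) := by linarith
        exact div_pos (mul_pos hδ h3) two_pos
      have hev := (hkey u).eventually (eventually_gt_nhds hpos)
      filter_upwards [hev, hEv] with m h1 h2
      obtain ⟨hmK, hm1⟩ := h2
      obtain ⟨hm0, -, -, hq0, hq1⟩ := hfacts m hm1 hmK
      obtain ⟨hx0neg, hfix⟩ := hx₀ m hmK
      have hm2 : (0:ℝ) < (m:ℝ)^2 := by positivity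
      have hX : 0 < qm m * Real.exp (-u/(m:ℝ)) - βlm m + u/(m:ℝ) := by
        by_contra hcon
        push_neg at hcon
        nlinarith [h1, mul_nonneg hm2.le (neg_nonneg.2 hcon)]
      have hgpos : 0 < qm m * Real.exp (-u/(m:ℝ)) - βlm m - (-u/(m:ℝ)) := by
        linarith [hX, neg_div (m:ℝ) u]
      have hcneg : -u/(m:ℝ) < 0 := div_neg_of_neg_of_pos (by linarith) hm0
      have hlt := aux_lt_x0 (qm m) (βlm m) (x₀ m) (-u/(m:ℝ)) hq0.le hq1 hfix hx0neg.le
        hcneg.le hgpos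
      have := (div_lt_iff₀ hm0).mp hlt
      rw [hu] at this
      nlinarith
    -- upper bound
    have hup : ∀ᶠ m : ℕ in atTop, (m:ℝ) * x₀ m + (Λl - κl) / σ ^ 2 < δ := by
      rcases le_or_gt ((Λl - κl) / σ ^ 2) δ with hcase | hcase
      · filter_upwards [hEv] with m h2
        obtain ⟨hmK, hm1⟩ := h2
        obtain ⟨hm0, -, -, -, -⟩ := hfacts m hm1 hmK
        obtain ⟨hx0neg, -⟩ := hx₀ m hmK
        nlinarith [mul_neg_of_pos_of_neg hm0 hx0neg]
      · obtain ⟨u, hu⟩ : ∃ u : ℝ, u = (Λl - κl) / σ ^ 2 - δ := ⟨_, rfl⟩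
        have hu0 : 0 < u := by linarith
        have hneg : u^2/2 + κl/σ^2*u + -(Λl^2 - κl^2)/(2*σ^4) < 0 := by
          have hval : u^2/2 + κl/σ^2*u + -(Λl^2 - κl^2)/(2*σ^4)
              = -(δ*(u + (Λl + κl) / σ ^ 2))/2 := by
            rw [hu]
            field_simp
            ring
          rw [hval]
          nlinarith
        have hev := (hkey u).eventually (eventually_lt_nhds hneg)
        filter_upwards [hev, hEv] with m h1 h2
        obtain ⟨hmK, hm1⟩ := h2
        obtain ⟨hm0, -, -, hq0, hq1⟩ := hfacts m hm1 hmK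
        obtain ⟨hx0neg, hfix⟩ := hx₀ m hmK
        have hm2 : (0:ℝ) < (m:ℝ)^2 := by positivity
        have hX : qm m * Real.exp (-u/(m:ℝ)) - βlm m + u/(m:ℝ) < 0 := by
          by_contra hcon
          push_neg at hcon
          nlinarith [h1, mul_nonneg hm2.le hcon]
        have hgneg : qm m * Real.exp (-u/(m:ℝ)) - βlm m - (-u/(m:ℝ)) < 0 := by
          linarith [hX, neg_div (m:ℝ) u]
        have hcneg : -u/(m:ℝ) < 0 := div_neg_of_neg_of_pos (by linarith) hm0
        have hlt := aux_x0_lt (qm m) (βlm m) (x₀ m) (-u/(m:ℝ)) hq0.le hq1 hfix hx0neg.le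
          hcneg.le hgneg
        have := (lt_div_iff₀ hm0).mp hlt
        rw [hu] at this
        nlinarith
    filter_upwards [hlow, hup] with m h1 h2
    rw [Real.dist_eq, abs_lt]
    constructor <;> [skip; skip] <;>
      · rw [neg_div]
        (try linarith)
    all_goals linarith
  -- auxiliary convergence facts
  have hx0_tend : Tendsto (fun m : ℕ => x₀ m) atTop (nhds 0) := by
    have h := T3.mul hinv
    rw [mul_zero] at h
    refine h.congr' ?_
    filter_upwards [eventually_ge_atTop 1] with m hm
    have hm0 : (0:ℝ) < m := by exact_mod_cast hm
    field_simp
  have hβl_tend : Tendsto (fun m : ℕ => βlm m) atTop (nhds 1) := by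
    have h := Tb2.mul hinv
    rw [mul_zero] at h
    have h1 : Tendsto (fun m : ℕ => 1 - βlm m) atTop (nhds 0) := by
      refine h.congr' ?_
      filter_upwards [eventually_ge_atTop 1] with m hm
      have hm0 : (0:ℝ) < m := by exact_mod_cast hm
      field_simp
    have h2 : Tendsto (fun m : ℕ => 1 - (1 - βlm m)) atTop (nhds (1 - 0)) :=
      tendsto_const_nhds.sub h1
    rw [sub_zero] at h2
    exact h2.congr fun m => by ring
  have hd_tend : Tendsto (fun m : ℕ => qm m * Real.exp (x₀ m)) atTop (nhds 1) := by
    have h := hx0_tend.add hβl_tend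
    rw [zero_add] at h
    refine h.congr' ?_
    filter_upwards [hEv] with m ⟨hmK, hm1⟩
    obtain ⟨-, hfix⟩ := hx₀ m hmK
    linarith
  -- (c) second part
  have Tc2 : Tendsto (fun m : ℕ => (m : ℝ) ^ 2 * (qm m / 2 * Real.exp (x₀ m) * (x₀ m) ^ 2))
      atTop (nhds ((Λl - κl) ^ 2 / (2 * σ ^ 4))) := by
    have h := ((hd_tend.mul T3).mul T3).div_const 2
    have hval : (Λl - κl) ^ 2 / (2 * σ ^ 4)
        = 1 * (-(Λl - κl) / σ ^ 2) * (-(Λl - κl) / σ ^ 2) / 2 := by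
      field_simp
    rw [hval]
    exact h.congr fun m => by ring
  -- (d)
  have Td : Tendsto (fun m : ℕ => (m : ℝ) * (1 - (x₀ m - (qm m - βlm m)) / x₀ m)) atTop
      (nhds ((Λl + κl) / (2 * σ ^ 2))) := by
    have hLne : -(Λl - κl) / σ ^ 2 ≠ 0 := by
      exact div_ne_zero (neg_ne_zero.2 hΛκne) hσ2.ne'
    have h := T2.div T3 hLne
    have hval : (Λl + κl) / (2 * σ ^ 2)
        = -(Λl ^ 2 - κl ^ 2) / (2 * σ ^ 4) / (-(Λl - κl) / σ ^ 2) := by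
      rw [eq_div_iff hLne]
      field_simp
      ring
    rw [hval]
    refine h.congr' ?_
    filter_upwards [hEv] with m ⟨hmK, hm1⟩
    obtain ⟨hm0, -, -, -, -⟩ := hfacts m hm1 hmK
    obtain ⟨hx0neg, -⟩ := hx₀ m hmK
    have hmne : (m:ℝ) ≠ 0 := hm0.ne'
    have hx0ne : x₀ m ≠ 0 := hx0neg.ne
    simp only [Pi.div_apply]
    field_simp
    ring
  -- (e)
  have Te1 : Tendsto (fun m : ℕ => (m : ℝ) * (1 - qm m * Real.exp (x₀ m))) atTop
      (nhds (Λl / σ ^ 2)) := by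
    have h : Tendsto (fun m : ℕ => κl / σ ^ 2 - (m:ℝ) * x₀ m) atTop
        (nhds (κl / σ ^ 2 - -(Λl - κl) / σ ^ 2)) := tendsto_const_nhds.sub T3
    have hval : Λl / σ ^ 2 = κl / σ ^ 2 - -(Λl - κl) / σ ^ 2 := by
      field_simp
      ring
    rw [hval]
    refine h.congr' ?_
    filter_upwards [hEv] with m ⟨hmK, hm1⟩
    obtain ⟨hm0, -, hβleq, -, -⟩ := hfacts m hm1 hmK
    obtain ⟨-, hfix⟩ := hx₀ m hmK
    have hmne : (m:ℝ) ≠ 0 := hm0.ne'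
    have hq : qm m * Real.exp (x₀ m) = x₀ m + βlm m := by linarith
    rw [hq, hβleq]
    field_simp
    ring
  have Te2 : Tendsto (fun m : ℕ => (m : ℝ) ^ 2 * x₀ m * (1 - qm m * Real.exp (x₀ m))) atTop
      (nhds (-Λl * (Λl - κl) / σ ^ 4)) := by
    have h := T3.mul Te1
    have hval : -Λl * (Λl - κl) / σ ^ 4 = -(Λl - κl) / σ ^ 2 * (Λl / σ ^ 2) := by
      field_simp
    rw [hval]
    exact h.congr fun m => by ring
  exact ⟨T1, ⟨T2, Tb2⟩, ⟨T3, Tc2⟩, Td, Te1, Te2⟩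
end
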